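/- Let G = (V,E,w) be a connected finite weighted graph with positive edge weights, and let G' = (V, E ∪ H, w') be a graph on the same vertex set such that every edge of G is an edge of G' with the same weight, and every edge {x,y} of G' has weight w'({x,y}) ≥ d_G(x,y). Let κ be an integer, β ≥ 1 an integer, and ε > 0. Suppose that for every pair u,v ∈ V with d_G(u,v) ≤ 2^κ we have d^β_{G'}(u,v) ≤ (1+ε)·d_G(u,v). Then for every pair u,v ∈ V with 2^κ < d_G(u,v) ≤ 2^{κ+1} we have d^{2β+1}_{G'}(u,v) ≤ (1+ε)·d_G(u,v). -/

import Mathlib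

open scoped ENNReal

namespace Stmt2

variable {V : Type*}

/-- The weight of a walk: sum of the weights of its edges (with multiplicity). -/
noncomputable def walkWeight (w : V → V → ℝ) {G : SimpleGraph V} {u v : V}
    (p : G.Walk u v) : ℝ :=
  (p.darts.map fun d => w d.toProd.1 d.toProd.2).sum

/-- Shortest-path distance: infimum of weights of walks from `u` to `v` (`∞` if none). -/
noncomputable def gdist (G : SimpleGraph V) (w : V → V → ℝ) (u v : V) : ℝ≥0∞ :=
  ⨅ (p : G.Walk u v), ENNReal.ofReal (walkWeight w p)

/-- `β`-hop-limited distance: infimum of weights of walks from `u` to `v`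
using at most `β` edges (`∞` if none). -/
noncomputable def hopDist (G : SimpleGraph V) (w : V → V → ℝ) (β : ℕ) (u v : V) : ℝ≥0∞ :=
  ⨅ (p : G.Walk u v) (_ : p.length ≤ β), ENNReal.ofReal (walkWeight w p)

lemma walkWeight_nil {w : V → V → ℝ} {G : SimpleGraph V} {u : V} :
    walkWeight w (SimpleGraph.Walk.nil : G.Walk u u) = 0 := by
  simp [walkWeight]

lemma walkWeight_cons {w : V → V → ℝ} {G : SimpleGraph V} {u x v : V}
    (h : G.Adj u x) (q : G.Walk x v) :
    walkWeight w (SimpleGraph.Walk.cons h q) = w u x + walkWeight w q := by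
  simp [walkWeight]

lemma walkWeight_append {w : V → V → ℝ} {G : SimpleGraph V} {u x v : V}
    (p : G.Walk u x) (q : G.Walk x v) :
    walkWeight w (p.append q) = walkWeight w p + walkWeight w q := by
  simp [walkWeight, SimpleGraph.Walk.darts_append]

lemma walkWeight_nonneg {G : SimpleGraph V} {w : V → V → ℝ}
    (hw : ∀ x y, G.Adj x y → 0 ≤ w x y) {u v : V} (p : G.Walk u v) :
    0 ≤ walkWeight w p := by
  apply List.sum_nonneg
  intro x hx
  simp only [List.mem_map] at hx
  obtain ⟨d, _, rfl⟩ := hx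
  exact hw _ _ d.adj

lemma walkWeight_bypass_le [DecidableEq V] {G : SimpleGraph V} {w : V → V → ℝ}
    (hw : ∀ x y, G.Adj x y → 0 ≤ w x y) {u v : V} (p : G.Walk u v) :
    walkWeight w p.bypass ≤ walkWeight w p := by
  have hnd : p.bypass.darts.Nodup :=
    SimpleGraph.Walk.darts_nodup_of_support_nodup p.bypass_isPath.support_nodup
  obtain ⟨l, hperm, hsl⟩ := List.subperm_of_subset hnd p.darts_bypass_subset
  calc walkWeight w p.bypass
      = (l.map fun d => w d.toProd.1 d.toProd.2).sum :=
        ((hperm.map _).sum_eq).symm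
    _ ≤ walkWeight w p := by
        refine List.Sublist.sum_le_sum (hsl.map _) ?_
        intro a ha
        simp only [List.mem_map] at ha
        obtain ⟨d, _, rfl⟩ := ha
        exact hw _ _ d.adj

lemma exists_min_walk [Fintype V] {G : SimpleGraph V} {w : V → V → ℝ}
    (hw : ∀ x y, G.Adj x y → 0 ≤ w x y) {u v : V} (hr : G.Reachable u v) :
    ∃ p : G.Walk u v, ENNReal.ofReal (walkWeight w p) = gdist G w u v := by
  classical
  have hfin : Finite {p : G.Walk u v // p.IsPath} := by
    have : Finite {p : G.Walk u v // p.length < Fintype.card V} := by infer_instance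
    exact Finite.of_injective
      (fun p : {p : G.Walk u v // p.IsPath} =>
        (⟨p.1, p.2.length_lt⟩ : {p : G.Walk u v // p.length < Fintype.card V}))
      (fun a b hab => by cases a; cases b; simpa using hab)
  obtain ⟨p0⟩ := hr
  have hne : Nonempty {p : G.Walk u v // p.IsPath} := ⟨⟨p0.bypass, p0.bypass_isPath⟩⟩
  obtain ⟨q, hq⟩ := Finite.exists_min (fun r : {p : G.Walk u v // p.IsPath} => walkWeight w r.1)
  refine ⟨q.1, le_antisymm ?_ (iInf_le _ q.1)⟩
  refine le_iInf fun r => ?_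
  refine ENNReal.ofReal_le_ofReal ?_
  exact le_trans (hq ⟨r.bypass, r.bypass_isPath⟩) (walkWeight_bypass_le hw r)

lemma hopDist_triangle (G' : SimpleGraph V) (w' : V → V → ℝ) (a b : ℕ) (u x v : V) :
    hopDist G' w' (a + b) u v ≤ hopDist G' w' a u x + hopDist G' w' b x v := by
  simp only [hopDist]
  rw [ENNReal.iInf_add]
  refine le_iInf fun p => ?_
  rw [ENNReal.iInf_add]
  refine le_iInf fun hp => ?_
  rw [ENNReal.add_iInf]
  refine le_iInf fun q => ?_
  rw [ENNReal.add_iInf]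
  refine le_iInf fun hq => ?_
  calc (⨅ (r : G'.Walk u v) (_ : r.length ≤ a + b), ENNReal.ofReal (walkWeight w' r))
      ≤ ENNReal.ofReal (walkWeight w' (p.append q)) := by
        refine iInf₂_le _ ?_
        rw [SimpleGraph.Walk.length_append]; omega
    _ ≤ _ := by rw [walkWeight_append]; exact ENNReal.ofReal_add_le

lemma exists_split {G : SimpleGraph V} {w : V → V → ℝ}
    (hw : ∀ x y, G.Adj x y → 0 ≤ w x y) :
    ∀ {u v : V} (p : G.Walk u v) (t : ℝ), 0 ≤ t → t < walkWeight w p →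
    ∃ (m m' : V) (_ : G.Adj m m') (p₁ : G.Walk u m) (p₂ : G.Walk m' v),
      walkWeight w p₁ + w m m' + walkWeight w p₂ = walkWeight w p ∧
      walkWeight w p₁ ≤ t ∧ walkWeight w p₂ ≤ walkWeight w p - t := by
  intro u v p
  induction p with
  | nil => intro t ht0 htl; rw [walkWeight_nil] at htl; linarith
  | @cons a c v h q ih =>
    intro t ht0 htl
    rw [walkWeight_cons] at htl
    by_cases hc : t < w a c
    · refine ⟨a, c, h, SimpleGraph.Walk.nil, q, ?_, ?_, ?_⟩
      · rw [walkWeight_cons, walkWeight_nil]; ring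
      · rw [walkWeight_nil]; exact ht0
      · rw [walkWeight_cons]; linarith
    · push_neg at hc
      obtain ⟨m, m', hmm, q₁, q₂, heq, h1, h2⟩ :=
        ih (t - w a c) (by linarith) (by linarith)
      refine ⟨m, m', hmm, SimpleGraph.Walk.cons h q₁, q₂, ?_, ?_, ?_⟩
      · rw [walkWeight_cons, walkWeight_cons]; linarith
      · rw [walkWeight_cons]; linarith
      · rw [walkWeight_cons]; linarith


/-- If `G' ⊇ G` keeps `G`-weights, every `G'`-edge has weight at least the
`G`-distance of its endpoints, and every pair at `G`-distance at most `2^κ` admits a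
`(1+ε)`-approximate path with at most `β` hops in `G'`, then every pair at `G`-distance in
`(2^κ, 2^{κ+1}]` admits a `(1+ε)`-approximate path with at most `2β+1` hops in `G'`. -/
theorem hop_doubling [Fintype V] (G G' : SimpleGraph V) (w w' : V → V → ℝ)
    (hconn : G.Connected)
    (hsub : G ≤ G')
    (hwsymm : ∀ x y, w x y = w y x)
    (hwpos : ∀ x y, G.Adj x y → 0 < w x y)
    (hw'symm : ∀ x y, w' x y = w' y x)
    (hagree : ∀ x y, G.Adj x y → w' x y = w x y)
    (hw'ge : ∀ x y, G'.Adj x y → gdist G w x y ≤ ENNReal.ofReal (w' x y))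
    (κ : ℤ) (β : ℕ) (hβ : 1 ≤ β) (ε : ℝ) (hε : 0 < ε)
    (hsmall : ∀ u v : V, gdist G w u v ≤ ENNReal.ofReal ((2 : ℝ) ^ κ) →
      hopDist G' w' β u v ≤ ENNReal.ofReal (1 + ε) * gdist G w u v) :
    ∀ u v : V, ENNReal.ofReal ((2 : ℝ) ^ κ) < gdist G w u v →
      gdist G w u v ≤ ENNReal.ofReal ((2 : ℝ) ^ (κ + 1)) →
      hopDist G' w' (2 * β + 1) u v ≤ ENNReal.ofReal (1 + ε) * gdist G w u v := by
  intro u v hlo hhi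
  classical
  have hw0 : ∀ x y, G.Adj x y → 0 ≤ w x y := fun x y h => (hwpos x y h).le
  obtain ⟨p, hp⟩ := exists_min_walk hw0 (hconn.preconnected u v)
  set W := walkWeight w p with hWdef
  have h2κ : (0:ℝ) < (2:ℝ)^κ := by positivity
  have hWgt : (2:ℝ)^κ < W := by
    rw [← hp] at hlo
    exact (ENNReal.ofReal_lt_ofReal_iff_of_nonneg h2κ.le).mp hlo
  have hWle : W ≤ (2:ℝ)^(κ+1) := by
    rw [← hp] at hhi
    exact (ENNReal.ofReal_le_ofReal_iff (by positivity)).mp hhi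
  have hWpos : 0 < W := lt_trans h2κ hWgt
  obtain ⟨m, m', hadj, p₁, p₂, heq, h1, h2⟩ :=
    exists_split hw0 p (W/2) (by linarith) (by linarith)
  have hpow : (2:ℝ)^(κ+1) = 2 * (2:ℝ)^κ := by
    rw [zpow_add_one₀ (two_ne_zero)]; ring
  have hhalf : W/2 ≤ (2:ℝ)^κ := by rw [hpow] at hWle; linarith
  have hg1 : gdist G w u m ≤ ENNReal.ofReal (walkWeight w p₁) :=
    iInf_le (fun q : G.Walk u m => ENNReal.ofReal (walkWeight w q)) p₁
  have hg2 : gdist G w m' v ≤ ENNReal.ofReal (walkWeight w p₂) :=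
    iInf_le (fun q : G.Walk m' v => ENNReal.ofReal (walkWeight w q)) p₂
  have hg1κ : gdist G w u m ≤ ENNReal.ofReal ((2:ℝ)^κ) :=
    hg1.trans (ENNReal.ofReal_le_ofReal (h1.trans hhalf))
  have hg2κ : gdist G w m' v ≤ ENNReal.ofReal ((2:ℝ)^κ) :=
    hg2.trans (ENNReal.ofReal_le_ofReal (by linarith))
  have hb1 := hsmall u m hg1κ
  have hb2 := hsmall m' v hg2κ
  have hadj' : G'.Adj m m' := hsub hadj
  have hmid : hopDist G' w' 1 m m' ≤ ENNReal.ofReal (w' m m') := by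
    have h := iInf₂_le
      (f := fun (q : G'.Walk m m') (_ : q.length ≤ 1) => ENNReal.ofReal (walkWeight w' q))
      (SimpleGraph.Walk.cons hadj' SimpleGraph.Walk.nil) (by simp)
    simpa [hopDist, walkWeight] using h
  have hone : (1:ℝ≥0∞) ≤ ENNReal.ofReal (1 + ε) := by
    rw [← ENNReal.ofReal_one]
    exact ENNReal.ofReal_le_ofReal (by linarith)
  have hnn1 : 0 ≤ walkWeight w p₁ := walkWeight_nonneg hw0 p₁
  have hnn2 : 0 ≤ walkWeight w p₂ := walkWeight_nonneg hw0 p₂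
  have hnnm : 0 ≤ w m m' := hw0 _ _ hadj
  have h2b : 2 * β + 1 = β + (1 + β) := by omega
  calc hopDist G' w' (2*β+1) u v
      = hopDist G' w' (β + (1 + β)) u v := by rw [h2b]
    _ ≤ hopDist G' w' β u m + hopDist G' w' (1+β) m v :=
        hopDist_triangle G' w' β (1+β) u m v
    _ ≤ hopDist G' w' β u m + (hopDist G' w' 1 m m' + hopDist G' w' β m' v) :=
        add_le_add_right (hopDist_triangle G' w' 1 β m m' v) _
    _ ≤ ENNReal.ofReal (1+ε) * gdist G w u m +
        (ENNReal.ofReal (w' m m') + ENNReal.ofReal (1+ε) * gdist G w m' v) :=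
        add_le_add hb1 (add_le_add hmid hb2)
    _ ≤ ENNReal.ofReal (1+ε) * ENNReal.ofReal (walkWeight w p₁) +
        (ENNReal.ofReal (1+ε) * ENNReal.ofReal (w m m') +
         ENNReal.ofReal (1+ε) * ENNReal.ofReal (walkWeight w p₂)) := by
        refine add_le_add (mul_le_mul_right hg1 _) (add_le_add ?_ (mul_le_mul_right hg2 _))
        rw [hagree m m' hadj]
        exact le_mul_of_one_le_left' hone
    _ = ENNReal.ofReal (1+ε) *
        (ENNReal.ofReal (walkWeight w p₁) + ENNReal.ofReal (w m m') +
         ENNReal.ofReal (walkWeight w p₂)) := by ring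
    _ = ENNReal.ofReal (1+ε) * ENNReal.ofReal W := by
        rw [← ENNReal.ofReal_add hnn1 hnnm, ← ENNReal.ofReal_add (by linarith) hnn2, heq]
    _ = ENNReal.ofReal (1+ε) * gdist G w u v := by rw [hp]

end Stmt2
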